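/- arXiv:2602.07710 — 2 statements merged into one kernel-verified Lean document; each statement's English description precedes it below -/
import Mathlib

section
/- Let X be a finite-dimensional normed real vector space with the metric induced by its norm, and let H be a hypothesis class on X satisfying the r-UUS property for some r > 0. Then for any ε, ε', δ, δ' > 0, H is (ε, ε')-uniformly generatable if and only if it is (δ, δ')-uniformly generatable, and H is (ε, ε')-non-uniformly generatable if and only if it is (δ, δ')-non-uniformly generatable. -/
open Set

namespace Gen

variable {X : Type*}

/-- The support of a hypothesis `h : X → Bool`: its set of positive examples. -/
def supp (h : X → Bool) : Set X := {x | h x = true}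

/-- Closed ball of radius `ε` around `c`, with respect to an explicit distance `ρ`. -/
def ball (ρ : X → X → ℝ) (c : X) (ε : ℝ) : Set X := {y | ρ c y ≤ ε}

/-- Closed `ε`-neighborhood of a set `A`: points whose infimal distance to `A` is `≤ ε`. -/
def setBall (ρ : X → X → ℝ) (A : Set X) (ε : ℝ) : Set X :=
  {y | sInf ((fun a => ρ a y) '' A) ≤ ε}

/-- The `ε`-covering number of `A` with respect to `ρ`, valued in `ℕ∞`
(`⊤` if no finite cover exists). -/
noncomputable def covN (ρ : X → X → ℝ) (ε : ℝ) (A : Set X) : ℕ∞ :=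
  sInf {n : ℕ∞ | ∃ S : Finset X, (S.card : ℕ∞) = n ∧ A ⊆ ⋃ θ ∈ S, ball ρ θ ε}

/-- `H` satisfies the `r`-Uniformly Unbounded Support property w.r.t. `ρ`. -/
def UUS (ρ : X → X → ℝ) (H : Set (X → Bool)) (r : ℝ) : Prop :=
  ∀ h ∈ H, covN ρ r (supp h) = ⊤

/-- The list of the first `s` terms `x 0, …, x (s-1)` of a sequence. -/
def prefList (x : ℕ → X) (s : ℕ) : List X := List.ofFn (fun i : Fin s => x i)

/-- The set of the first `s` terms of a sequence. -/
def prefSet (x : ℕ → X) (s : ℕ) : Set X := x '' Iio s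

/-- `(ε, ε')`-uniform generatability. -/
def UnifGen (ρ : X → X → ℝ) (ε ε' : ℝ) (H : Set (X → Bool)) : Prop :=
  ∃ G : List X → X, ∃ d : ℕ, ∀ h ∈ H, ∀ x : ℕ → X, (∀ i, x i ∈ supp h) →
    ∀ t : ℕ, (d : ℕ∞) ≤ covN ρ ε (prefSet x t) →
      ∀ s ≥ t, G (prefList x s) ∈ supp h \ setBall ρ (prefSet x s) ε'

/-- `(ε, ε')`-non-uniform generatability. -/
def NonUnifGen (ρ : X → X → ℝ) (ε ε' : ℝ) (H : Set (X → Bool)) : Prop :=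
  ∃ G : List X → X, ∀ h ∈ H, ∃ d : ℕ, ∀ x : ℕ → X, (∀ i, x i ∈ supp h) →
    ∀ t : ℕ, (d : ℕ∞) ≤ covN ρ ε (prefSet x t) →
      ∀ s ≥ t, G (prefList x s) ∈ supp h \ setBall ρ (prefSet x s) ε'

/-- `(ε, ε')`-generatability in the limit. -/
def GenInLimit (ρ : X → X → ℝ) (ε ε' : ℝ) (H : Set (X → Bool)) : Prop :=
  ∃ G : List X → X, ∀ h ∈ H, ∀ x : ℕ → X, (∀ i, x i ∈ supp h) →
    supp h ⊆ setBall ρ (range x) ε →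
      ∃ t : ℕ, ∀ s ≥ t, G (prefList x s) ∈ supp h \ setBall ρ (prefSet x s) ε'

/-- The closure `⟨x_1,…,x_t⟩_H` of a finite sample: intersection of the supports of all
hypotheses in the version space. -/
def clos (H : Set (X → Bool)) (l : List X) : Set X :=
  ⋂ h ∈ {h | h ∈ H ∧ ∀ y ∈ l, y ∈ supp h}, supp h

/-- The `(ε, ε')`-closure dimension of `H`, valued in `ℕ∞`. -/
noncomputable def closureDim (ρ : X → X → ℝ) (ε ε' : ℝ) (H : Set (X → Bool)) : ℕ∞ :=
  sSup (insert 0 {d : ℕ∞ | ∃ h ∈ H, ∃ l : List X, (∀ y ∈ l, y ∈ supp h) ∧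
    covN ρ ε {y | y ∈ l} = d ∧ covN ρ ε' (clos H l) ≠ ⊤})

/-- `ρ` is a metric on `X`. -/
def IsMetricDist (ρ : X → X → ℝ) : Prop :=
  (∀ x y, ρ x y = 0 ↔ x = y) ∧ (∀ x y, ρ x y = ρ y x) ∧
    ∀ x y z, ρ x z ≤ ρ x y + ρ y z

/-- `(X, ρ)` is doubling: every closed ball of radius `r` can be covered by at most `M`
closed balls of radius `r / 2`. -/
def Doubling (ρ : X → X → ℝ) : Prop :=
  ∃ M : ℕ, ∀ (x : X) (r : ℝ), 0 < r →
    ∃ S : Finset X, S.card ≤ M ∧ ball ρ x r ⊆ ⋃ θ ∈ S, ball ρ θ (r / 2)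


section Aux

open scoped Classical

variable {X : Type*} [NormedAddCommGroup X] [NormedSpace ℝ X] [FiniteDimensional ℝ X]

lemma exists_finset_cover (a b : ℝ) (hb : 0 < b) :
    ∃ S : Finset X, Metric.closedBall (0:X) a ⊆ ⋃ θ ∈ S, Metric.closedBall θ b := by
  obtain ⟨t, -, htfin, hcov⟩ := (isCompact_closedBall (0:X) a).finite_cover_balls hb
  refine ⟨htfin.toFinset, fun y hy => ?_⟩
  have := hcov hy
  simp only [Set.mem_iUnion] at this ⊢
  obtain ⟨θ, hθ, hyθ⟩ := this
  exact ⟨θ, htfin.mem_toFinset.mpr hθ, Metric.ball_subset_closedBall hyθ⟩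

lemma covN_le_card {η : ℝ} {A : Set X} {S : Finset X}
    (h : A ⊆ ⋃ θ ∈ S, ball dist θ η) : covN dist η A ≤ S.card :=
  sInf_le ⟨S, rfl, h⟩

lemma covN_pos_nonempty {Y : Type*} {ρ : Y → Y → ℝ} {η : ℝ} {A : Set Y}
    (h : 1 ≤ covN ρ η A) : A.Nonempty := by
  rcases A.eq_empty_or_nonempty with hA | hA
  · exfalso
    have h0 : covN ρ η A ≤ ((∅ : Finset Y).card : ℕ∞) :=
      sInf_le ⟨∅, rfl, by simp [hA]⟩
    have h1 : (1:ℕ∞) ≤ 0 := le_trans h (by simpa using h0)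
    simp at h1
  · exact hA

lemma covN_exists {Y : Type*} {ρ : Y → Y → ℝ} {η : ℝ} {A : Set Y} (h : covN ρ η A ≠ ⊤) :
    ∃ S : Finset Y, (S.card : ℕ∞) = covN ρ η A ∧ A ⊆ ⋃ θ ∈ S, ball ρ θ η := by
  have hne : {n : ℕ∞ | ∃ S : Finset Y, (S.card : ℕ∞) = n ∧ A ⊆ ⋃ θ ∈ S, ball ρ θ η}.Nonempty := by
    by_contra hc
    rw [Set.not_nonempty_iff_eq_empty] at hc
    exact h (by simp [covN, hc])
  exact csInf_mem hne

lemma covN_le_mul {a b : ℝ} {S₀ : Finset X}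
    (hcov : Metric.closedBall (0:X) a ⊆ ⋃ θ ∈ S₀, Metric.closedBall θ b) (A : Set X) :
    covN dist b A ≤ ((S₀.card + 1 : ℕ) : ℕ∞) * covN dist a A := by
  by_cases htop : covN dist a A = ⊤
  · rw [htop, ENat.mul_top (m := ((S₀.card + 1 : ℕ) : ℕ∞)) (by exact_mod_cast Nat.succ_ne_zero S₀.card)]
    exact le_top
  obtain ⟨S, hScard, hScov⟩ := covN_exists htop
  set T : Finset X := Finset.image (fun p : X × X => p.1 + p.2) (S ×ˢ S₀) with hT
  have hTcov : A ⊆ ⋃ θ ∈ T, ball dist θ b := by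
    intro y hy
    have := hScov hy
    simp only [Set.mem_iUnion] at this
    obtain ⟨θ, hθS, hyθ⟩ := this
    have hdθ : dist θ y ≤ a := hyθ
    have h1 : y - θ ∈ Metric.closedBall (0:X) a := by
      simp only [Metric.mem_closedBall, dist_zero_right]
      rw [show ‖y - θ‖ = dist y θ from (dist_eq_norm y θ).symm, dist_comm]
      exact hdθ
    have := hcov h1
    simp only [Set.mem_iUnion] at this
    obtain ⟨σ, hσ, h2⟩ := this
    simp only [Set.mem_iUnion]
    refine ⟨θ + σ, Finset.mem_image.mpr ⟨(θ, σ), Finset.mem_product.mpr ⟨hθS, hσ⟩, rfl⟩, ?_⟩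
    show dist (θ + σ) y ≤ b
    have heq : dist (θ + σ) y = dist (y - θ) σ := by
      rw [dist_comm, dist_eq_norm, dist_eq_norm]
      congr 1
      abel
    rw [heq]
    exact Metric.mem_closedBall.mp h2
  calc covN dist b A ≤ (T.card : ℕ∞) := covN_le_card hTcov
    _ ≤ ((S.card * S₀.card : ℕ) : ℕ∞) := by
        exact_mod_cast (Finset.card_image_le.trans (le_of_eq (Finset.card_product S S₀)))
    _ ≤ ((S₀.card + 1 : ℕ) : ℕ∞) * (S.card : ℕ∞) := by
        rw [← Nat.cast_mul]
        have hcd : S.card * S₀.card ≤ (S₀.card + 1) * S.card := by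
          rw [Nat.mul_comm]
          exact Nat.mul_le_mul_right _ (Nat.le_succ _)
        exact_mod_cast hcd
    _ = _ := by rw [hScard]

lemma lt_dist_of_not_mem_setBall {A : Set X} {y a : X} {η : ℝ}
    (h : y ∉ setBall dist A η) (ha : a ∈ A) : η < dist a y := by
  by_contra hc
  apply h
  show sInf ((fun a => dist a y) '' A) ≤ η
  refine le_trans (csInf_le ⟨0, ?_⟩ (Set.mem_image_of_mem _ ha)) (not_lt.mp hc)
  rintro z ⟨p, -, rfl⟩
  exact dist_nonneg

lemma exists_of_mem_setBall {A : Set X} {y : X} {η : ℝ} (hA : A.Finite) (hne : A.Nonempty)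
    (h : y ∈ setBall dist A η) : ∃ a ∈ A, dist a y ≤ η := by
  have hmem := Set.Nonempty.csInf_mem (hne.image (fun a => dist a y)) (hA.image _)
  obtain ⟨a, ha, hEq⟩ := hmem
  exact ⟨a, ha, le_trans (le_of_eq hEq) h⟩

lemma mem_prefList_eq (x : ℕ → X) (s : ℕ) : {y | y ∈ prefList x s} = prefSet x s := by
  ext y
  simp only [prefList, prefSet, Set.mem_setOf_eq, List.mem_ofFn, Set.mem_image, Set.mem_Iio,
    Set.mem_range]
  constructor
  · rintro ⟨i, rfl⟩; exact ⟨i, i.2, rfl⟩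
  · rintro ⟨i, hi, rfl⟩; exact ⟨⟨i, hi⟩, rfl⟩

lemma prefList_succ (x : ℕ → X) (n : ℕ) : prefList x (n+1) = prefList x n ++ [x n] := by
  rw [prefList, prefList, List.ofFn_succ', List.concat_eq_append]
  simp [Fin.coe_castSucc, Fin.val_last]

/-- The guarantee provided by a generator `G` with threshold `d` for a single hypothesis. -/
def Guar (ε ε' : ℝ) (G : List X → X) (d : ℕ) (h : X → Bool) : Prop :=
  ∀ x : ℕ → X, (∀ i, x i ∈ supp h) → ∀ t : ℕ, (d : ℕ∞) ≤ covN dist ε (prefSet x t) →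
    ∀ s ≥ t, G (prefList x s) ∈ supp h \ setBall dist (prefSet x s) ε'

/-- Iteratively extend a list by feeding the generator its own outputs. -/
def ylist (G : List X → X) (l : List X) : ℕ → List X
  | 0 => l
  | k + 1 => ylist G l k ++ [G (ylist G l k)]

/-- The new generator: iterate `G`, and output the first iterate that is `δ'`-far
from the input list (if any). -/
noncomputable def newG (δ' : ℝ) (G : List X → X) (l : List X) : X :=
  if hk : ∃ k, G (ylist G l k) ∉ setBall dist {y | y ∈ l} δ'
  then G (ylist G l hk.choose) else G l

lemma guar_transfer {ε ε' δ δ' : ℝ} (hε' : 0 < ε') (hδ : 0 < δ)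
    {S₀ : Finset X} (hS₀ : Metric.closedBall (0:X) ε ⊆ ⋃ θ ∈ S₀, Metric.closedBall θ δ)
    (G : List X → X) (d : ℕ) (h : X → Bool) (hG : Guar ε ε' G d h) :
    Guar δ δ' (newG δ' G) ((S₀.card + 1) * d + 1) h := by
  intro x hx t ht s hs
  -- the prefix up to `t` is nonempty, hence `1 ≤ t ≤ s`
  have ht1 : (1:ℕ∞) ≤ covN dist δ (prefSet x t) := by
    refine le_trans ?_ ht
    exact_mod_cast Nat.one_le_iff_ne_zero.mpr (Nat.succ_ne_zero _)
  have hne_t : (prefSet x t).Nonempty := covN_pos_nonempty ht1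
  have hts : 1 ≤ t := by
    by_contra h0
    push_neg at h0
    interval_cases t
    obtain ⟨p, j, hj, -⟩ := hne_t
    exact absurd hj (by simp)
  have hs1 : 1 ≤ s := le_trans hts hs
  -- convert the covering-number condition from scale δ to scale ε
  have hεcond : (d : ℕ∞) ≤ covN dist ε (prefSet x t) := by
    by_contra hc
    push_neg at hc
    have hfin : covN dist ε (prefSet x t) ≠ ⊤ := ne_top_of_lt (lt_of_lt_of_le hc le_top)
    obtain ⟨n, hn0⟩ := WithTop.ne_top_iff_exists.mp hfin
    have hn : covN dist ε (prefSet x t) = (n : ℕ∞) := by exact_mod_cast hn0.symm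
    have hnd : n < d := by rw [hn] at hc; exact_mod_cast hc
    have h2 := covN_le_mul hS₀ (prefSet x t)
    rw [hn, ← Nat.cast_mul] at h2
    have h4 : (S₀.card + 1) * d + 1 ≤ (S₀.card + 1) * n := by exact_mod_cast le_trans ht h2
    have h5 : (S₀.card + 1) * n ≤ (S₀.card + 1) * d := Nat.mul_le_mul_left _ (Nat.le_of_lt hnd)
    omega
  set l := prefList x s with hl
  set y : ℕ → X := fun k => G (ylist G l k) with hy
  set x' : ℕ → X := fun i => if i < s then x i else y (i - s) with hx'
  have hx'eq : ∀ i < s, x' i = x i := fun i hi => by simp [hx', hi]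
  have hx'y : ∀ k, x' (s + k) = y k := fun k => by simp [hx']
  have hprefx' : ∀ k, prefList x' (s + k) = ylist G l k := by
    intro k
    induction k with
    | zero =>
        show prefList x' s = l
        rw [hl]
        exact congrArg List.ofFn (funext fun i => hx'eq i i.2)
    | succ k ih =>
        rw [show s + (k + 1) = (s + k) + 1 from rfl, prefList_succ, ih, hx'y k]
        rfl
  -- the iterates are all valid generations at scale ε'
  have main : ∀ k, y k ∈ supp h ∧ y k ∉ setBall dist (prefSet x' (s + k)) ε' := by
    intro k
    induction k using Nat.strong_induction_on with
    | _ k IH =>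
      set xk : ℕ → X := fun i => if i < s + k then x' i else x 0 with hxk
      have hxkx' : ∀ i < s + k, xk i = x' i := fun i hi => by simp [hxk, hi]
      have hxkmem : ∀ i, xk i ∈ supp h := by
        intro i
        by_cases hik : i < s + k
        · rw [hxkx' i hik]
          by_cases his : i < s
          · rw [hx'eq i his]; exact hx i
          · have hyi : y (i - s) ∈ supp h := (IH (i - s) (by omega)).1
            have : x' i = y (i - s) := by simp [hx', his]
            rw [this]; exact hyi
        · have : xk i = x 0 := by simp [hxk, hik]
          rw [this]; exact hx 0
      have hpt : prefSet xk t = prefSet x t :=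
        Set.image_congr fun a ha => by
          rw [hxkx' a (by exact lt_of_lt_of_le ha (by omega)), hx'eq a (lt_of_lt_of_le ha hs)]
      have hout := hG xk hxkmem t (by rw [hpt]; exact hεcond) (s + k) (by omega)
      have hpl : prefList xk (s + k) = prefList x' (s + k) :=
        congrArg List.ofFn (funext fun i => hxkx' i i.2)
      have hps : prefSet xk (s + k) = prefSet x' (s + k) :=
        Set.image_congr fun a ha => hxkx' a ha
      rw [hpl, hps, hprefx' k] at hout
      exact ⟨hout.1, hout.2⟩
  -- there is an iterate that is δ'-far from the sample
  have hmemEq : {z | z ∈ l} = prefSet x s := mem_prefList_eq x s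
  have hkey : ∃ k, G (ylist G l k) ∉ setBall dist {y | y ∈ l} δ' := by
    by_contra hall
    push_neg at hall
    obtain ⟨S₁, hS₁⟩ := exists_finset_cover (X := X) δ' (ε'/2) (by positivity)
    set T : Finset X :=
      Finset.image (fun p : X × X => p.1 + p.2) (((Finset.range s).image x) ×ˢ S₁) with hT
    have hfinP : (prefSet x s).Finite := (Set.finite_Iio s).image x
    have hneP : (prefSet x s).Nonempty := ⟨x 0, 0, by simpa using Nat.lt_of_lt_of_le Nat.zero_lt_one hs1, rfl⟩
    have hck : ∀ k : ℕ, ∃ c, c ∈ T ∧ dist c (y k) ≤ ε'/2 := by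
      intro k
      have hmem : y k ∈ setBall dist (prefSet x s) δ' := by
        rw [← hmemEq]; exact hall k
      obtain ⟨a, ha, hay⟩ := exists_of_mem_setBall hfinP hneP hmem
      have h1 : y k - a ∈ Metric.closedBall (0:X) δ' := by
        simp only [Metric.mem_closedBall, dist_zero_right]
        rw [show ‖y k - a‖ = dist (y k) a from (dist_eq_norm _ _).symm, dist_comm]
        exact hay
      have := hS₁ h1
      simp only [Set.mem_iUnion] at this
      obtain ⟨σ, hσ, h2⟩ := this
      refine ⟨a + σ, ?_, ?_⟩
      · obtain ⟨i, hi, rfl⟩ := ha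
        exact Finset.mem_image.mpr ⟨(x i, σ), Finset.mem_product.mpr
          ⟨Finset.mem_image.mpr ⟨i, Finset.mem_range.mpr hi, rfl⟩, hσ⟩, rfl⟩
      · have heq : dist (a + σ) (y k) = dist (y k - a) σ := by
          rw [dist_comm, dist_eq_norm, dist_eq_norm]
          congr 1
          abel
        rw [heq]
        exact Metric.mem_closedBall.mp h2
    set f : ℕ → X := fun k => (hck k).choose with hf
    have hfT : ∀ k, f k ∈ T := fun k => (hck k).choose_spec.1
    have hfd : ∀ k, dist (f k) (y k) ≤ ε'/2 := fun k => (hck k).choose_spec.2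
    have hsep : ∀ j k, j < k → ε' < dist (y j) (y k) := by
      intro j k hjk
      have hyj : y j ∈ prefSet x' (s + k) := ⟨s + j, by simp; omega, hx'y j⟩
      exact lt_dist_of_not_mem_setBall (main k).2 hyj
    have hinj : Function.Injective f := by
      intro j k hjk
      by_contra hne
      have key : ∀ u v : ℕ, u < v → f u = f v → False := by
        intro u v huv hfe
        have h1 : dist (y u) (y v) ≤ dist (y u) (f u) + dist (f u) (y v) := dist_triangle _ _ _
        have h2 : dist (y u) (f u) = dist (f u) (y u) := dist_comm _ _
        have h3 : dist (f u) (y v) ≤ ε'/2 := by rw [hfe]; exact hfd v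
        have h4 := hsep u v huv
        have h5 := hfd u
        linarith
      rcases Nat.lt_trichotomy j k with hlt | heq | hgt
      · exact key j k hlt hjk
      · exact hne heq
      · exact key k j hgt hjk.symm
    have hranfin : (Set.range f).Finite :=
      Set.Finite.subset T.finite_toSet (by rintro _ ⟨k, rfl⟩; exact hfT k)
    exact Set.infinite_range_of_injective hinj hranfin
  -- conclude
  have hout : newG δ' G l = G (ylist G l hkey.choose) := dif_pos hkey
  have hspec := hkey.choose_spec
  have hSB : setBall dist {z : X | z ∈ l} δ' = setBall dist (prefSet x s) δ' := by
    rw [hmemEq]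
  have hnot : G (ylist G l hkey.choose) ∉ setBall dist (prefSet x s) δ' := by
    intro hmem
    exact hspec ((Set.ext_iff.mp hSB _).mpr hmem)
  rw [show newG δ' G (prefList x s) = G (ylist G l hkey.choose) from hout]
  exact ⟨(main hkey.choose).1, hnot⟩

lemma unifGen_mono {H : Set (X → Bool)} {ε ε' δ δ' : ℝ} (hε' : 0 < ε') (hδ : 0 < δ)
    (hgen : UnifGen dist ε ε' H) : UnifGen dist δ δ' H := by
  obtain ⟨G, d, hGd⟩ := hgen
  obtain ⟨S₀, hS₀⟩ := exists_finset_cover (X := X) ε δ hδ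
  exact ⟨newG δ' G, (S₀.card + 1) * d + 1,
    fun h hh => guar_transfer hε' hδ hS₀ G d h (hGd h hh)⟩

lemma nonUnifGen_mono {H : Set (X → Bool)} {ε ε' δ δ' : ℝ} (hε' : 0 < ε') (hδ : 0 < δ)
    (hgen : NonUnifGen dist ε ε' H) : NonUnifGen dist δ δ' H := by
  obtain ⟨G, hGd⟩ := hgen
  obtain ⟨S₀, hS₀⟩ := exists_finset_cover (X := X) ε δ hδ
  refine ⟨newG δ' G, fun h hh => ?_⟩
  obtain ⟨d, hd⟩ := hGd h hh
  exact ⟨(S₀.card + 1) * d + 1, guar_transfer hε' hδ hS₀ G d h hd⟩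

end Aux
/-- in a finite-dimensional normed real vector space, uniform and
non-uniform generatability are invariant to the choice of novelty scales. -/
theorem gen_scale_invariant_of_finiteDimensional {X : Type*}
    [NormedAddCommGroup X] [NormedSpace ℝ X] [FiniteDimensional ℝ X]
    (H : Set (X → Bool)) (r : ℝ) (hr : 0 < r) (hUUS : UUS dist H r)
    (ε ε' δ δ' : ℝ) (hε : 0 < ε) (hε' : 0 < ε') (hδ : 0 < δ) (hδ' : 0 < δ') :
    (UnifGen dist ε ε' H ↔ UnifGen dist δ δ' H) ∧
      (NonUnifGen dist ε ε' H ↔ NonUnifGen dist δ δ' H) := by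
  exact ⟨⟨fun hg => unifGen_mono hε' hδ hg, fun hg => unifGen_mono hδ' hε hg⟩,
    ⟨fun hg => nonUnifGen_mono hε' hδ hg, fun hg => nonUnifGen_mono hδ' hε hg⟩⟩

end Gen
end

section
/- In ℓ² with standard metric ρ, for any ε > 0 there exist a hypothesis class H satisfying the ε-UUS property with respect to ρ and a metric ρ' on ℓ², strongly equivalent to ρ (i.e., there exist constants c, C > 0 with c·ρ(x, y) ≤ ρ'(x, y) ≤ C·ρ(x, y) for all x, y), such that H is (τ, τ)-uniformly generatable with respect to ρ for every τ ∈ (0, ε), but H is not (τ, τ)-non-uniformly generatable with respect to ρ' for any τ ∈ (0, ε). -/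
open Set

namespace Gen

variable {X : Type*}

/-- The real Hilbert space `ℓ²` of square-summable real sequences. -/
noncomputable abbrev ellTwo : Type := lp (fun _ : ℕ => ℝ) 2

open scoped ENNReal

section PtBasics

noncomputable def pt (a : ℝ) (n : ℕ) : ellTwo := lp.single 2 n a

lemma pt_apply_self (a : ℝ) (n : ℕ) : (pt a n) n = a :=
  lp.single_apply_self (E := fun _ : ℕ => ℝ) 2 n a

lemma pt_apply_ne (a : ℝ) (n : ℕ) {m : ℕ} (h : m ≠ n) : (pt a n) m = 0 :=
  lp.single_apply_ne (E := fun _ : ℕ => ℝ) 2 n a h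

lemma norm_pt (a : ℝ) (n : ℕ) : ‖pt a n‖ = |a| := by
  have := lp.norm_single (p := 2) (E := fun _ : ℕ => ℝ) (by norm_num) n a
  simpa [pt] using this

lemma summable_sq (f : ellTwo) : Summable (fun n => (f n)^2) := by
  have h := Memℓp.summable (p := (2:ℝ≥0∞)) (E := fun _ : ℕ => ℝ) (by norm_num) (lp.memℓp f)
  have e : (fun i : ℕ => ‖f i‖ ^ (2:ℝ≥0∞).toReal) = fun n => (f n)^2 := by
    funext n
    rw [show (2:ℝ≥0∞).toReal = (2:ℝ) by norm_num, Real.rpow_two, Real.norm_eq_abs, sq_abs]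
  rwa [e] at h

lemma norm_sq_eq (f : ellTwo) : ‖f‖^2 = ∑' n, (f n)^2 := by
  have h := lp.norm_rpow_eq_tsum (p := (2:ℝ≥0∞)) (E := fun _ : ℕ => ℝ) (by norm_num) f
  rw [show (2:ℝ≥0∞).toReal = (2:ℝ) by norm_num] at h
  calc ‖f‖^2 = ‖f‖ ^ (2:ℝ) := (Real.rpow_two _).symm
  _ = ∑' n, ‖f n‖ ^ (2:ℝ) := h
  _ = ∑' n, (f n)^2 := by
      congr 1; funext n; rw [Real.rpow_two, Real.norm_eq_abs, sq_abs]

lemma coord_le_dist (f g : ellTwo) (n : ℕ) : |f n - g n| ≤ dist f g := by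
  have h := lp.norm_apply_le_norm (E := fun _ : ℕ => ℝ) (p := 2) (by norm_num) (f - g) n
  rw [dist_eq_norm]
  simpa [lp.coeFn_sub] using h

lemma two_coord_le (f g : ellTwo) {m n : ℕ} (h : m ≠ n) :
    (f m - g m)^2 + (f n - g n)^2 ≤ (dist f g)^2 := by
  rw [dist_eq_norm, norm_sq_eq]
  have hs : Summable (fun k => ((f - g) k)^2) := summable_sq _
  have := Summable.sum_le_tsum ({m, n} : Finset ℕ) (fun k _ => sq_nonneg ((f-g) k)) hs
  rw [Finset.sum_insert (by simpa using h), Finset.sum_singleton] at this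
  simpa [lp.coeFn_sub] using this

end PtBasics

section Dmap

noncomputable def Dw : ℕ → ℝ := fun n => if n % 4 = 1 then 2 else if n % 4 = 0 then (1/2 : ℝ) else 1

lemma Dw_pos (n : ℕ) : 0 < Dw n := by unfold Dw; split <;> [norm_num; split <;> norm_num]
lemma Dw_le (n : ℕ) : Dw n ≤ 2 := by unfold Dw; split <;> [norm_num; split <;> norm_num]
lemma Dw_ge (n : ℕ) : (1/2:ℝ) ≤ Dw n := by unfold Dw; split <;> [norm_num; split <;> norm_num]

lemma Dw_mz (r : ℕ) : Dw (4*r) = 1/2 := by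
  unfold Dw
  rw [if_neg (by omega), if_pos (by omega)]

lemma Dw_tp (r : ℕ) : Dw (4*r+1) = 2 := by
  unfold Dw
  rw [if_pos (by omega)]

lemma memD (f : ellTwo) : Memℓp (fun n => Dw n * f n) 2 := by
  apply memℓp_gen
  have e : (fun i : ℕ => ‖Dw i * f i‖ ^ (2:ℝ≥0∞).toReal) = fun n => (Dw n * f n)^2 := by
    funext n
    rw [show (2:ℝ≥0∞).toReal = (2:ℝ) by norm_num, Real.rpow_two, Real.norm_eq_abs, sq_abs]
  rw [e]
  apply Summable.of_nonneg_of_le (fun n => sq_nonneg _) (fun n => ?_)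
    ((summable_sq f).mul_left 4)
  have h4 : (Dw n)^2 ≤ 4 := by have := Dw_le n; have := Dw_pos n; nlinarith
  have key : (Dw n * f n)^2 = (Dw n)^2 * (f n)^2 := by ring
  rw [key]
  nlinarith [mul_le_mul_of_nonneg_right h4 (sq_nonneg (f n))]

noncomputable def Dm (f : ellTwo) : ellTwo := ⟨fun n => Dw n * f n, memD f⟩

lemma Dm_apply (f : ellTwo) (n : ℕ) : (Dm f) n = Dw n * f n := rfl

lemma Dm_injective : Function.Injective Dm := by
  intro f g h
  apply lp.ext
  funext n
  have : (Dm f) n = (Dm g) n := by rw [h]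
  rw [Dm_apply, Dm_apply] at this
  exact mul_left_cancel₀ (Dw_pos n).ne' this

lemma Dm_sub (f g : ellTwo) : Dm f - Dm g = Dm (f - g) := by
  apply lp.ext
  funext n
  rw [show (⇑(Dm f - Dm g)) = ⇑(Dm f) - ⇑(Dm g) from lp.coeFn_sub _ _]
  simp only [Pi.sub_apply, Dm_apply, lp.coeFn_sub]
  ring

lemma Dm_zero : Dm 0 = 0 := by
  apply lp.ext; funext n
  simp [Dm_apply, lp.coeFn_zero]

lemma norm_Dm_le (f : ellTwo) : ‖Dm f‖ ≤ 2 * ‖f‖ := by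
  have h1 : ‖Dm f‖^2 ≤ 4 * ‖f‖^2 := by
    rw [norm_sq_eq, norm_sq_eq, ← tsum_mul_left]
    apply Summable.tsum_le_tsum _ (summable_sq (Dm f)) ((summable_sq f).mul_left 4)
    intro n
    rw [Dm_apply]
    have h4 : (Dw n)^2 ≤ 4 := by have := Dw_le n; have := Dw_pos n; nlinarith
    have key : (Dw n * f n)^2 = (Dw n)^2 * (f n)^2 := by ring
    rw [key]
    nlinarith [mul_le_mul_of_nonneg_right h4 (sq_nonneg (f n))]
  nlinarith [norm_nonneg (Dm f), norm_nonneg f]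

lemma norm_le_Dm (f : ellTwo) : ‖f‖ ≤ 2 * ‖Dm f‖ := by
  have h1 : ‖f‖^2 ≤ 4 * ‖Dm f‖^2 := by
    rw [norm_sq_eq, norm_sq_eq, ← tsum_mul_left]
    apply Summable.tsum_le_tsum _ (summable_sq f) ((summable_sq (Dm f)).mul_left 4)
    intro n
    rw [Dm_apply]
    have h4 : (1/4:ℝ) ≤ (Dw n)^2 := by have := Dw_ge n; have := Dw_pos n; nlinarith
    have key : (Dw n * f n)^2 = (Dw n)^2 * (f n)^2 := by ring
    rw [key]
    nlinarith [mul_le_mul_of_nonneg_right h4 (sq_nonneg (f n))]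
  nlinarith [norm_nonneg (Dm f), norm_nonneg f]

lemma Dm_pt (a : ℝ) (n : ℕ) : Dm (pt a n) = pt (Dw n * a) n := by
  apply lp.ext
  funext m
  rw [Dm_apply]
  by_cases h : m = n
  · subst h
    rw [pt_apply_self, pt_apply_self]
  · rw [pt_apply_ne _ _ h, pt_apply_ne _ _ h, mul_zero]

/-- The distorted metric. -/
noncomputable def rho : ellTwo → ellTwo → ℝ := fun x y => dist (Dm x) (Dm y)

lemma rho_nonneg (x y : ellTwo) : 0 ≤ rho x y := dist_nonneg

lemma rho_metric : IsMetricDist rho := by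
  refine ⟨fun x y => ?_, fun x y => dist_comm _ _, fun x y z => dist_triangle _ _ _⟩
  constructor
  · intro h
    exact Dm_injective (by rwa [rho, dist_eq_zero] at h)
  · rintro rfl
    exact dist_self _

lemma rho_lower (x y : ellTwo) : (1/2) * dist x y ≤ rho x y := by
  rw [rho, dist_eq_norm, dist_eq_norm, Dm_sub]
  nlinarith [norm_le_Dm (x - y)]

lemma rho_upper (x y : ellTwo) : rho x y ≤ 2 * dist x y := by
  rw [rho, dist_eq_norm, dist_eq_norm, Dm_sub]
  exact norm_Dm_le (x - y)

lemma rho_zero_pt (a : ℝ) (n : ℕ) : rho 0 (pt a n) = |Dw n * a| := by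
  rw [rho, Dm_zero, dist_zero_left, Dm_pt, norm_pt]

lemma rho_top_sep {τ : ℝ} (hτ : 0 < τ) {r r' : ℕ} (h : r ≠ r') :
    2*τ < rho (pt τ (4*r+1)) (pt τ (4*r'+1)) := by
  have hne : 4*r+1 ≠ 4*r'+1 := by omega
  have h2 := two_coord_le (Dm (pt τ (4*r+1))) (Dm (pt τ (4*r'+1))) hne
  rw [Dm_pt, Dm_pt, Dw_tp, Dw_tp] at h2
  rw [pt_apply_self, pt_apply_ne _ _ hne, pt_apply_ne _ _ (Ne.symm hne), pt_apply_self] at h2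
  have h8 : 8*τ^2 ≤ (rho (pt τ (4*r+1)) (pt τ (4*r'+1)))^2 := by
    rw [rho, Dm_pt, Dm_pt, Dw_tp, Dw_tp]
    nlinarith [h2]
  nlinarith [rho_nonneg (pt τ (4*r+1)) (pt τ (4*r'+1))]

end Dmap

section CovSetBall
variable {X : Type*}

lemma mem_prefList_iff {x : ℕ → X} {s : ℕ} {y : X} :
    y ∈ prefList x s ↔ y ∈ prefSet x s := by
  simp only [prefList, List.mem_ofFn, prefSet, mem_image, mem_Iio]
  constructor
  · rintro ⟨i, rfl⟩; exact ⟨i, i.2, rfl⟩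
  · rintro ⟨i, hi, rfl⟩; exact ⟨⟨i, hi⟩, rfl⟩

lemma prefSet_mono {x : ℕ → X} {t s : ℕ} (h : t ≤ s) : prefSet x t ⊆ prefSet x s :=
  image_mono (fun i hi => lt_of_lt_of_le hi h)

lemma mem_prefSet_of_lt {x : ℕ → X} {i s : ℕ} (h : i < s) : x i ∈ prefSet x s :=
  ⟨i, h, rfl⟩

lemma covN_le_one {ρ : X → X → ℝ} {ε : ℝ} {A : Set X} (θ : X)
    (h : ∀ y ∈ A, ρ θ y ≤ ε) : covN ρ ε A ≤ 1 := by
  apply sInf_le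
  refine ⟨{θ}, by simp, ?_⟩
  intro y hy
  simp only [mem_iUnion, Finset.mem_singleton, exists_prop]
  exact ⟨θ, rfl, h y hy⟩

lemma covN_ge_two_elim {ρ : X → X → ℝ} {ε : ℝ} {A : Set X}
    (h2 : (2:ℕ∞) ≤ covN ρ ε A) (θ : X) : ∃ y ∈ A, ¬ ρ θ y ≤ ε := by
  by_contra hc
  push_neg at hc
  have := (covN_le_one θ (fun y hy => hc y hy)).trans_lt (by norm_num : (1:ℕ∞) < 2)
  exact absurd h2 (not_le.mpr this)

lemma le_covN_of_sep {ρ : X → X → ℝ} {ε : ℝ} {A : Set X}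
    (hsymm : ∀ a b, ρ a b = ρ b a) (htri : ∀ a b c, ρ a c ≤ ρ a b + ρ b c)
    (T : Finset X) (hTA : ∀ y ∈ T, y ∈ A)
    (hsep : ∀ a ∈ T, ∀ b ∈ T, a ≠ b → 2*ε < ρ a b) :
    (T.card : ℕ∞) ≤ covN ρ ε A := by
  apply le_sInf
  rintro n ⟨S, rfl, hcov⟩
  rw [Nat.cast_le]
  have hc : ∀ y ∈ T, ∃ θ ∈ S, ρ θ y ≤ ε := by
    intro y hy
    have := hcov (hTA y hy)
    simpa only [mem_iUnion, exists_prop, ball, mem_setOf_eq] using this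
  classical
  set F : X → X := fun y => if h : ∃ θ ∈ S, ρ θ y ≤ ε then h.choose else y with hF
  apply Finset.card_le_card_of_injOn F
  · intro y hy
    have h := hc y hy
    simp only [hF, dif_pos h]
    exact h.choose_spec.1
  · intro a ha b hb hab
    by_contra hne
    have hA := hc a ha
    have hB := hc b hb
    have e1 : ρ (F a) a ≤ ε := by simp only [hF, dif_pos hA]; exact hA.choose_spec.2
    have e2 : ρ (F b) b ≤ ε := by simp only [hF, dif_pos hB]; exact hB.choose_spec.2
    rw [← hab] at e2
    have : ρ a b ≤ 2*ε := by
      calc ρ a b ≤ ρ a (F a) + ρ (F a) b := htri a (F a) b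
      _ ≤ ε + ε := by rw [hsymm a (F a)]; exact add_le_add e1 e2
      _ = 2*ε := by ring
    exact absurd this (not_le.mpr (hsep a ha b hb hne))

lemma covN_eq_top {ρ : X → X → ℝ} {ε : ℝ} {A : Set X}
    (h : ∀ S : Finset X, ¬ A ⊆ ⋃ θ ∈ S, ball ρ θ ε) : covN ρ ε A = ⊤ := by
  rw [covN, show {n : ℕ∞ | ∃ S : Finset X, (S.card : ℕ∞) = n ∧ A ⊆ ⋃ θ ∈ S, ball ρ θ ε} = ∅
    from eq_empty_iff_forall_notMem.mpr (by rintro n ⟨S, _, hS⟩; exact h S hS), sInf_empty]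

lemma mem_setBall_of_mem {ρ : X → X → ℝ} {A : Set X} {ε : ℝ} {a z : X}
    (hnn : ∀ u v : X, 0 ≤ ρ u v) (ha : a ∈ A) (h : ρ a z ≤ ε) : z ∈ setBall ρ A ε := by
  have hb : BddBelow ((fun a => ρ a z) '' A) := ⟨0, by rintro v ⟨u, _, rfl⟩; exact hnn u z⟩
  have : sInf ((fun a => ρ a z) '' A) ≤ ρ a z := csInf_le hb ⟨a, ha, rfl⟩
  exact le_trans this h

lemma not_mem_setBall {ρ : X → X → ℝ} {A : Set X} {ε : ℝ} {z : X} {b : ℝ}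
    (hA : A.Nonempty) (hb : ε < b) (h : ∀ a ∈ A, b ≤ ρ a z) : z ∉ setBall ρ A ε := by
  intro hz
  have : b ≤ sInf ((fun a => ρ a z) '' A) := by
    apply le_csInf (hA.image _)
    rintro v ⟨u, hu, rfl⟩
    exact h u hu
  exact absurd (this.trans hz) (not_le.mpr hb)

end CovSetBall

section Constr

-- pt equality analysis
lemma pt_eq_pt {a b : ℝ} {n m : ℕ} (ha : a ≠ 0) (h : pt a n = pt b m) : a = b ∧ n = m := by
  have hn : (pt a n) n = (pt b m) n := by rw [h]
  rw [pt_apply_self] at hn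
  by_cases e : n = m
  · subst e; rw [pt_apply_self] at hn; exact ⟨hn, rfl⟩
  · rw [pt_apply_ne _ _ e] at hn; exact absurd hn ha

lemma pt_ne_zero {a : ℝ} {n : ℕ} (ha : a ≠ 0) : pt a n ≠ 0 := by
  intro h
  have : (pt a n) n = (0 : ellTwo) n := by rw [h]
  rw [pt_apply_self] at this
  rw [show ((0:ellTwo) : ℕ → ℝ) = 0 from lp.coeFn_zero _ _] at this
  exact ha this

def MZ (β : ℝ) : Set ellTwo := {z | ∃ q r, 0 < q ∧ q < β ∧ z = pt q (4*r)}
def TP (β : ℝ) (B : Set ℕ) : Set ellTwo := {z | ∃ r ∈ B, z = pt β (4*r+1)}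
def FR (ε : ℝ) (j : Bool) : Set ellTwo :=
  {z | ∃ r : ℕ, z = pt (10*ε) (4*r + (if j then 3 else 2))}
def SS (ε β : ℝ) (B : Set ℕ) (j : Bool) : Set ellTwo :=
  insert (0:ellTwo) (MZ β ∪ TP β B ∪ FR ε j)

lemma SS_cases {ε β : ℝ} {B : Set ℕ} {j : Bool} {z : ellTwo} (h : z ∈ SS ε β B j) :
    z = 0 ∨ (∃ q r, 0 < q ∧ q < β ∧ z = pt q (4*r)) ∨ (∃ r ∈ B, z = pt β (4*r+1)) ∨
      (∃ r : ℕ, z = pt (10*ε) (4*r + (if j then 3 else 2))) := by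
  rcases h with h | (h | h) | h
  · exact Or.inl h
  · exact Or.inr (Or.inl h)
  · exact Or.inr (Or.inr (Or.inl h))
  · exact Or.inr (Or.inr (Or.inr h))

lemma zero_mem_SS {ε β : ℝ} {B : Set ℕ} {j : Bool} : (0:ellTwo) ∈ SS ε β B j :=
  mem_insert _ _
lemma mz_subset_SS {ε β : ℝ} {B : Set ℕ} {j : Bool} : MZ β ⊆ SS ε β B j :=
  fun z hz => mem_insert_iff.mpr (Or.inr (Or.inl (Or.inl hz)))
lemma tp_subset_SS {ε β : ℝ} {B : Set ℕ} {j : Bool} : TP β B ⊆ SS ε β B j :=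
  fun z hz => mem_insert_iff.mpr (Or.inr (Or.inl (Or.inr hz)))
lemma fr_subset_SS {ε β : ℝ} {B : Set ℕ} {j : Bool} : FR ε j ⊆ SS ε β B j :=
  fun z hz => mem_insert_iff.mpr (Or.inr (Or.inr hz))

lemma mem_SS_mz {ε β q : ℝ} {B : Set ℕ} {j : Bool} {r : ℕ} (hq : 0 < q) (hε : 0 < ε) :
    pt q (4*r) ∈ SS ε β B j ↔ q < β := by
  constructor
  · intro h
    rcases SS_cases h with h | ⟨q', r', hq', hq'β, h⟩ | ⟨r', _, h⟩ | ⟨r', h⟩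
    · exact absurd h (pt_ne_zero hq.ne')
    · obtain ⟨e1, _⟩ := pt_eq_pt hq.ne' h; exact e1 ▸ hq'β
    · obtain ⟨_, e2⟩ := pt_eq_pt hq.ne' h; omega
    · obtain ⟨_, e2⟩ := pt_eq_pt hq.ne' h
      rcases j with _|_ <;> simp at e2 <;> omega
  · intro h
    exact mz_subset_SS ⟨q, r, hq, h, rfl⟩

lemma mem_SS_tp {ε β b : ℝ} {B : Set ℕ} {j : Bool} {r : ℕ} (hb : 0 < b) (hε : 0 < ε) :
    pt b (4*r+1) ∈ SS ε β B j ↔ (b = β ∧ r ∈ B) := by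
  constructor
  · intro h
    rcases SS_cases h with h | ⟨q', r', hq', hq'β, h⟩ | ⟨r', hr', h⟩ | ⟨r', h⟩
    · exact absurd h (pt_ne_zero hb.ne')
    · obtain ⟨_, e2⟩ := pt_eq_pt hb.ne' h; omega
    · obtain ⟨e1, e2⟩ := pt_eq_pt hb.ne' h
      have : r = r' := by omega
      exact ⟨e1, this ▸ hr'⟩
    · obtain ⟨_, e2⟩ := pt_eq_pt hb.ne' h
      rcases j with _|_ <;> simp at e2 <;> omega
  · rintro ⟨rfl, hr⟩
    exact tp_subset_SS ⟨r, hr, rfl⟩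

lemma mem_SS_fr2 {ε β : ℝ} {B : Set ℕ} {j : Bool} {r : ℕ} (hε : 0 < ε)
    (h : pt (10*ε) (4*r+2) ∈ SS ε β B j) : j = false := by
  have h10 : (0:ℝ) < 10*ε := by linarith
  rcases SS_cases h with h | ⟨q', r', hq', hq'β, h⟩ | ⟨r', _, h⟩ | ⟨r', h⟩
  · exact absurd h (pt_ne_zero h10.ne')
  · obtain ⟨_, e2⟩ := pt_eq_pt h10.ne' h; omega
  · obtain ⟨_, e2⟩ := pt_eq_pt h10.ne' h; omega
  · obtain ⟨_, e2⟩ := pt_eq_pt h10.ne' h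
    rcases j with _|_
    · rfl
    · simp at e2; omega

lemma mem_SS_fr3 {ε β : ℝ} {B : Set ℕ} {j : Bool} {r : ℕ} (hε : 0 < ε)
    (h : pt (10*ε) (4*r+3) ∈ SS ε β B j) : j = true := by
  have h10 : (0:ℝ) < 10*ε := by linarith
  rcases SS_cases h with h | ⟨q', r', hq', hq'β, h⟩ | ⟨r', _, h⟩ | ⟨r', h⟩
  · exact absurd h (pt_ne_zero h10.ne')
  · obtain ⟨_, e2⟩ := pt_eq_pt h10.ne' h; omega
  · obtain ⟨_, e2⟩ := pt_eq_pt h10.ne' h; omega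
  · obtain ⟨_, e2⟩ := pt_eq_pt h10.ne' h
    rcases j with _|_
    · simp at e2; omega
    · rfl

lemma SS_single_coord {ε β : ℝ} {B : Set ℕ} {j : Bool} {z : ellTwo} (h : z ∈ SS ε β B j) :
    ∃ k, ∀ n, n ≠ k → z n = 0 := by
  rcases SS_cases h with rfl | ⟨q, r, _, _, rfl⟩ | ⟨r, _, rfl⟩ | ⟨r, rfl⟩
  · exact ⟨0, fun n _ => by rw [show ((0:ellTwo) : ℕ → ℝ) = 0 from lp.coeFn_zero _ _]; rfl⟩
  · exact ⟨4*r, fun n hn => pt_apply_ne _ _ hn⟩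
  · exact ⟨4*r+1, fun n hn => pt_apply_ne _ _ hn⟩
  · exact ⟨_, fun n hn => pt_apply_ne _ _ hn⟩

-- norms of non-far SS elements
lemma SS_norm_le {ε β : ℝ} {B : Set ℕ} {j : Bool} {z : ellTwo} (hβ : 0 < β) (h : z ∈ SS ε β B j)
    (hnf : ¬ ∃ r : ℕ, z = pt (10*ε) (4*r+2) ∨ z = pt (10*ε) (4*r+3)) : ‖z‖ ≤ β := by
  rcases SS_cases h with rfl | ⟨q, r, hq, hqβ, rfl⟩ | ⟨r, _, rfl⟩ | ⟨r, rfl⟩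
  · simpa using hβ.le
  · rw [norm_pt, abs_of_pos hq]; exact hqβ.le
  · rw [norm_pt, abs_of_pos hβ]
  · exfalso; apply hnf
    rcases j with _|_
    · exact ⟨r, Or.inl (by simp)⟩
    · exact ⟨r, Or.inr (by simp)⟩

-- freshness machinery
open Classical in
noncomputable def coordOf (z : ellTwo) : ℕ :=
  if h : ∃ k, ∀ n, n ≠ k → z n = 0 then h.choose else 0

open Classical in
lemma coordOf_spec {z : ellTwo} (h : ∃ k, ∀ n, n ≠ k → z n = 0) :
    ∀ n, n ≠ coordOf z → z n = 0 := by
  rw [coordOf, dif_pos h]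
  exact h.choose_spec

def lsup : List ℕ → ℕ := fun L => L.foldr max 0
lemma le_lsup {L : List ℕ} {a : ℕ} (h : a ∈ L) : a ≤ lsup L := by
  induction L with
  | nil => cases h
  | cons b L ih =>
    rcases List.mem_cons.mp h with rfl | h
    · exact le_max_left _ _
    · exact le_trans (ih h) (le_max_right _ _)

lemma fresh_coord {ε β : ℝ} {B : Set ℕ} {j : Bool} (l : List ellTwo)
    (hl : ∀ y ∈ l, y ∈ SS ε β B j) :
    ∃ N : ℕ, ∀ y ∈ l, ∀ c < 4, y (4*N+c) = 0 := by
  refine ⟨lsup (l.map coordOf) + 1, fun y hy c hc => ?_⟩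
  apply coordOf_spec (SS_single_coord (hl y hy))
  have : coordOf y ≤ lsup (l.map coordOf) := le_lsup (List.mem_map_of_mem hy)
  omega

-- the spec for the uniform generator
def Spec (ε τ' : ℝ) (l : List ellTwo) (z : ellTwo) : Prop :=
  (∀ (β' : ℝ) (B' : Set ℕ) (j' : Bool), (∀ y ∈ l, y ∈ SS ε β' B' j') → z ∈ SS ε β' B' j') ∧
  ∃ b : ℝ, τ' < b ∧ ∀ y ∈ l, b ≤ dist y z

lemma spec_exists {ε τ' β : ℝ} {B : Set ℕ} {j : Bool} (hε : 0 < ε) (hτ : 0 < τ')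
    (hτε : τ' < ε) (hβ : 0 < β) (l : List ellTwo) (hl : ∀ y ∈ l, y ∈ SS ε β B j)
    (y₀ : ellTwo) (hy₀ : y₀ ∈ l) (hy₀n : τ' < ‖y₀‖) :
    ∃ z, Spec ε τ' l z := by
  obtain ⟨N, hN⟩ := fresh_coord l hl
  by_cases hfar : ∃ y ∈ l, ∃ r : ℕ, y = pt (10*ε) (4*r+2) ∨ y = pt (10*ε) (4*r+3)
  · obtain ⟨y₁, hy₁, r₁, hc⟩ := hfar
    have h10 : τ' < 10*ε := by linarith
    rcases hc with rfl | rfl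
    · refine ⟨pt (10*ε) (4*N+2), ?_, 10*ε, h10, ?_⟩
      · intro β' B' j' hcons
        have := mem_SS_fr2 hε (hcons _ hy₁)
        subst this
        exact fr_subset_SS ⟨N, by simp⟩
      · intro y hy
        have h1 := coord_le_dist y (pt (10*ε) (4*N+2)) (4*N+2)
        rw [hN y hy 2 (by norm_num), pt_apply_self] at h1
        rw [abs_of_nonpos (by linarith)] at h1
        linarith
    · refine ⟨pt (10*ε) (4*N+3), ?_, 10*ε, h10, ?_⟩
      · intro β' B' j' hcons
        have := mem_SS_fr3 hε (hcons _ hy₁)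
        subst this
        exact fr_subset_SS ⟨N, by simp⟩
      · intro y hy
        have h1 := coord_le_dist y (pt (10*ε) (4*N+3)) (4*N+3)
        rw [hN y hy 3 (by norm_num), pt_apply_self] at h1
        rw [abs_of_nonpos (by linarith)] at h1
        linarith
  · -- no far point in l
    have hy₀S := hl y₀ hy₀
    have key : ∃ a : ℝ, τ' < a ∧
        (∀ (β' : ℝ) (B' : Set ℕ) (j' : Bool), y₀ ∈ SS ε β' B' j' → a ≤ β') := by
      rcases SS_cases hy₀S with rfl | ⟨q, r, hq, hqβ, rfl⟩ | ⟨r, _, rfl⟩ | ⟨r, rfl⟩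
      · rw [norm_zero] at hy₀n; linarith
      · refine ⟨q, by rwa [norm_pt, abs_of_pos hq] at hy₀n, ?_⟩
        intro β' B' j' hm
        exact ((mem_SS_mz hq hε).mp hm).le
      · refine ⟨β, by rwa [norm_pt, abs_of_pos hβ] at hy₀n, ?_⟩
        intro β' B' j' hm
        exact ((mem_SS_tp hβ hε).mp hm).1.le
      · exfalso; apply hfar
        rcases j with _|_
        · exact ⟨_, hy₀, r, Or.inl (by simp)⟩
        · exact ⟨_, hy₀, r, Or.inr (by simp)⟩
    obtain ⟨a, haτ, ha⟩ := key
    set qq := (τ' + a)/2 with hqq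
    have hqq1 : τ' < qq := by rw [hqq]; linarith
    have hqq2 : qq < a := by rw [hqq]; linarith
    have hqqpos : 0 < qq := by linarith
    refine ⟨pt qq (4*N), ?_, qq, hqq1, ?_⟩
    · intro β' B' j' hcons
      have hβ' := ha β' B' j' (hcons _ hy₀)
      exact mz_subset_SS ⟨qq, N, hqqpos, lt_of_lt_of_le hqq2 hβ', rfl⟩
    · intro y hy
      have h0 : y (4*N) = 0 := by
        have := hN y hy 0 (by norm_num)
        simpa using this
      have h1 := coord_le_dist y (pt qq (4*N)) (4*N)
      rw [h0, pt_apply_self, abs_of_nonpos (by linarith)] at h1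
      linarith

end Constr

section Hyp
open Classical in
noncomputable def hyp (ε β : ℝ) (B : Set ℕ) (j : Bool) : ellTwo → Bool :=
  fun y => decide (y ∈ SS ε β B j)

open Classical in
lemma supp_hyp (ε β : ℝ) (B : Set ℕ) (j : Bool) : supp (hyp ε β B j) = SS ε β B j := by
  ext y
  simp [supp, hyp, decide_eq_true_eq]

def Hcl (ε : ℝ) : Set (ellTwo → Bool) :=
  {h | ∃ β B j, 0 < β ∧ β < ε ∧ h = hyp ε β B j}

open Classical in
noncomputable def GG (ε τ' : ℝ) : List ellTwo → ellTwo :=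
  fun l => if h : ∃ z, Spec ε τ' l z then h.choose else 0

lemma unifGen_Hcl {ε τ' : ℝ} (hε : 0 < ε) (hτ : 0 < τ') (hτε : τ' < ε) :
    UnifGen dist τ' τ' (Hcl ε) := by
  classical
  refine ⟨GG ε τ', 2, ?_⟩
  rintro h ⟨β, B, j, hβ, hβε, rfl⟩ x hx t htrig s hst
  have hsupp : ∀ i, x i ∈ SS ε β B j := fun i => by
    have := hx i; rwa [supp_hyp] at this
  have hl : ∀ y ∈ prefList x s, y ∈ SS ε β B j := by
    intro y hy
    obtain ⟨i, _, rfl⟩ := mem_prefList_iff.mp hy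
    exact hsupp i
  obtain ⟨y₀, hy₀t, hy₀n⟩ := covN_ge_two_elim htrig 0
  have hy₀n' : τ' < ‖y₀‖ := by
    rw [← dist_zero_left]
    exact not_le.mp hy₀n
  have hy₀s : y₀ ∈ prefSet x s := prefSet_mono hst hy₀t
  have hy₀l : y₀ ∈ prefList x s := mem_prefList_iff.mpr hy₀s
  have hE : ∃ z, Spec ε τ' (prefList x s) z :=
    spec_exists hε hτ hτε hβ _ hl y₀ hy₀l hy₀n'
  have hGG : GG ε τ' (prefList x s) = hE.choose := dif_pos hE
  obtain ⟨hcons, b, hbτ, hbd⟩ := hE.choose_spec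
  rw [hGG]
  constructor
  · rw [supp_hyp]
    exact hcons β B j hl
  · exact not_mem_setBall ⟨y₀, hy₀s⟩ hbτ
      (fun a ha => hbd a (mem_prefList_iff.mpr ha))

lemma uus_Hcl {ε : ℝ} (hε : 0 < ε) : UUS dist (Hcl ε) ε := by
  rintro h ⟨β, B, j, hβ, hβε, rfl⟩
  rw [supp_hyp]
  apply covN_eq_top
  intro S hS
  set q : ℕ → ellTwo := fun r => pt (10*ε) (4*r + (if j then 3 else 2)) with hq
  have hmem : ∀ r : ℕ, q r ∈ SS ε β B j := fun r => fr_subset_SS ⟨r, rfl⟩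
  have hcov : ∀ r : ℕ, ∃ θ ∈ S, dist θ (q r) ≤ ε := by
    intro r
    have := hS (hmem r)
    simpa only [mem_iUnion, exists_prop, ball, mem_setOf_eq] using this
  classical
  choose θf hθS hθd using hcov
  obtain ⟨r, r', hrr, heq⟩ :=
    Finite.exists_ne_map_eq_of_infinite (fun r : ℕ => (⟨θf r, hθS r⟩ : {x // x ∈ S}))
  have hθ : θf r = θf r' := congrArg Subtype.val heq
  have hdist : dist (q r) (q r') ≤ 2*ε := by
    calc dist (q r) (q r') ≤ dist (q r) (θf r) + dist (θf r) (q r') := dist_triangle _ _ _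
      _ ≤ ε + ε := by
          rw [dist_comm (q r) (θf r)]
          exact add_le_add (hθd r) (hθ ▸ hθd r')
      _ = 2*ε := by ring
  have hne : 4*r + (if j then 3 else 2) ≠ 4*r' + (if j then 3 else 2) := by
    rcases j with _|_ <;> simp <;> omega
  have hlow := coord_le_dist (q r) (q r') (4*r + (if j then 3 else 2))
  rw [hq] at hlow
  simp only at hlow
  rw [pt_apply_self, pt_apply_ne _ _ hne, sub_zero] at hlow
  rw [abs_of_pos (by linarith)] at hlow
  rw [hq] at hdist
  simp only at hdist
  linarith

end Hyp

section Trap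
variable (G : List ellTwo → ellTwo) (τ : ℝ)

/-- the sequence determined by an index function: starts with `0`, then top points. -/
noncomputable def xOf (f : ℕ → ℕ) : ℕ → ellTwo :=
  fun m => if m = 0 then 0 else pt τ (4*(f (m-1))+1)

noncomputable def zzOf (f : ℕ → ℕ) (j : ℕ) : ellTwo := G (prefList (xOf τ f) j)

open Classical in
noncomputable def badIdx (f : ℕ → ℕ) (j : ℕ) : ℕ :=
  if h : ∃ n, pt τ (4*n+1) = zzOf G τ f j then h.choose else 0

noncomputable def pick (i : ℕ) (f : ℕ → ℕ) : ℕ :=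
  max ((Finset.range i).sup f) ((Finset.range (i+2)).sup (badIdx G τ f)) + 1

noncomputable def kAux : ℕ → ℕ → ℕ
  | 0 => fun _ => 0
  | (i+1) => fun m => if m = i then pick G τ i (kAux i) else kAux i m

noncomputable def kk : ℕ → ℕ := fun m => kAux G τ (m+1) m

lemma kAux_stab : ∀ i m, m < i → kAux G τ i m = kk G τ m := by
  intro i
  induction i with
  | zero => intro m hm; omega
  | succ i ih =>
    intro m hm
    by_cases e : m = i
    · subst e; rfl
    · have hmi : m < i := by omega
      show (if m = i then pick G τ i (kAux G τ i) else kAux G τ i m) = _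
      rw [if_neg e]
      exact ih m hmi

lemma kk_eq (i : ℕ) : kk G τ i = pick G τ i (kAux G τ i) := by
  show (if i = i then _ else _) = _
  rw [if_pos rfl]

lemma zz_eq (i j : ℕ) (hj : j ≤ i + 1) :
    zzOf G τ (kAux G τ i) j = zzOf G τ (kk G τ) j := by
  unfold zzOf
  congr 1
  unfold prefList
  apply congrArg List.ofFn
  funext m
  rcases m with ⟨m, hm⟩
  simp only
  unfold xOf
  by_cases h0 : m = 0
  · rw [if_pos h0, if_pos h0]
  · rw [if_neg h0, if_neg h0, kAux_stab G τ i (m-1) (by omega)]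

lemma kk_gt {m i : ℕ} (hmi : m < i) : kk G τ m < kk G τ i := by
  have h1 : kk G τ m = kAux G τ i m := (kAux_stab G τ i m hmi).symm
  rw [kk_eq G τ i, pick, h1]
  have h2 : kAux G τ i m ≤ (Finset.range i).sup (kAux G τ i) :=
    Finset.le_sup (Finset.mem_range.mpr hmi)
  omega

lemma kk_inj (hτ : 0 < τ) : Function.Injective (kk G τ) := by
  intro a b hab
  rcases lt_trichotomy a b with h | h | h
  · exact absurd hab (kk_gt G τ h).ne
  · exact h
  · exact absurd hab.symm (kk_gt G τ h).ne

open Classical in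
lemma avoid (hτ : 0 < τ) (i j : ℕ) (hj : j ≤ i+1) :
    zzOf G τ (kk G τ) j ≠ pt τ (4*(kk G τ i)+1) := by
  intro hEq
  have hz : zzOf G τ (kAux G τ i) j = pt τ (4*(kk G τ i)+1) := by
    rw [zz_eq G τ i j hj]; exact hEq
  have hex : ∃ n, pt τ (4*n+1) = zzOf G τ (kAux G τ i) j := ⟨kk G τ i, hz.symm⟩
  have hbad : pt τ (4*(badIdx G τ (kAux G τ i) j)+1) = zzOf G τ (kAux G τ i) j := by
    unfold badIdx
    rw [dif_pos hex]
    exact hex.choose_spec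
  have hbk : badIdx G τ (kAux G τ i) j = kk G τ i := by
    have := hbad.trans hz
    obtain ⟨_, e2⟩ := pt_eq_pt hτ.ne' this
    omega
  have h2 : badIdx G τ (kAux G τ i) j ≤ (Finset.range (i+2)).sup (badIdx G τ (kAux G τ i)) :=
    Finset.le_sup (Finset.mem_range.mpr (by omega))
  have h3 := kk_eq G τ i
  rw [pick] at h3
  omega

lemma notNonUnifGen_Hcl {ε τ : ℝ} (hε : 0 < ε) (hτ : 0 < τ) (hτε : τ < ε) :
    ¬ NonUnifGen rho τ τ (Hcl ε) := by
  rintro ⟨G, hG⟩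
  set x : ℕ → ellTwo := xOf τ (kk G τ) with hxdef
  set B : Set ℕ := Set.range (kk G τ) with hBdef
  -- basic facts about x
  have hx0 : x 0 = 0 := by rw [hxdef]; rfl
  have hxs : ∀ i : ℕ, x (i+1) = pt τ (4*(kk G τ i)+1) := by
    intro i; rw [hxdef]; unfold xOf; rw [if_neg (by omega)]; norm_num
  have hxmem : ∀ (j : Bool) (i : ℕ), x i ∈ SS ε τ B j := by
    intro j i
    rcases i with _ | i
    · rw [hx0]; exact zero_mem_SS
    · rw [hxs i]; exact tp_subset_SS ⟨kk G τ i, ⟨i, rfl⟩, rfl⟩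
  -- covering number lower bound
  have hcov : ∀ d : ℕ, (d : ℕ∞) ≤ covN rho τ (prefSet x (d+1)) := by
    intro d
    classical
    have hinj : Function.Injective (fun i : ℕ => pt τ (4*(kk G τ i)+1)) := by
      intro a b hab
      obtain ⟨_, e2⟩ := pt_eq_pt hτ.ne' hab
      exact kk_inj G τ hτ (by omega)
    set T : Finset ellTwo := (Finset.range d).image (fun i => pt τ (4*(kk G τ i)+1)) with hT
    have hcard : T.card = d := by
      rw [hT, Finset.card_image_of_injective _ hinj, Finset.card_range]
    have := le_covN_of_sep (ρ := rho) (ε := τ) (A := prefSet x (d+1))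
      (fun a b => rho_metric.2.1 a b) (fun a b c => rho_metric.2.2 a b c) T ?_ ?_
    · rwa [hcard] at this
    · intro y hy
      rw [hT] at hy
      obtain ⟨i, hi, rfl⟩ := Finset.mem_image.mp hy
      rw [Finset.mem_range] at hi
      rw [← hxs i]
      exact mem_prefSet_of_lt (by omega)
    · intro a ha b hb hab
      rw [hT] at ha hb
      obtain ⟨i, _, rfl⟩ := Finset.mem_image.mp ha
      obtain ⟨i', _, rfl⟩ := Finset.mem_image.mp hb
      have hii : kk G τ i ≠ kk G τ i' := by
        intro e
        exact hab (by rw [e])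
      exact rho_top_sep hτ hii
  -- zero is always in the prefix
  have h0mem : ∀ s : ℕ, 1 ≤ s → (0:ellTwo) ∈ prefSet x s := by
    intro s hs
    rw [← hx0]
    exact mem_prefSet_of_lt (by omega)
  by_cases P : ∀ D : ℕ, ∃ s, D ≤ s ∧ G (prefList x s) ∉ FR ε false
  · -- use j = false
    obtain ⟨d, hd⟩ := hG (hyp ε τ B false) ⟨τ, B, false, hτ, hτε, rfl⟩
    obtain ⟨s, hsD, hzs⟩ := P (d+1)
    have hsucc := hd x (fun i => by rw [supp_hyp]; exact hxmem false i) (d+1) (hcov d) s hsD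
    obtain ⟨hin, hout⟩ := hsucc
    rw [supp_hyp] at hin
    have hs1 : 1 ≤ s := by omega
    rcases SS_cases hin with hz0 | ⟨q, r, hq, hqτ, heq⟩ | ⟨r, hr, heq⟩ | ⟨r, heq⟩
    · -- z = 0
      exact hout (hz0 ▸ mem_setBall_of_mem rho_nonneg (h0mem s hs1)
        (by rw [(rho_metric.1 0 0).mpr rfl]; exact hτ.le))
    · -- z is a mezzanine point
      apply hout
      apply mem_setBall_of_mem rho_nonneg (h0mem s hs1)
      rw [heq, rho_zero_pt, Dw_mz, abs_of_pos (by linarith)]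
      linarith
    · -- z is a top point: must be in the prefix
      obtain ⟨i, rfl⟩ := hr
      have hav := avoid G τ hτ i s
      have hsi : ¬ s ≤ i + 1 := by
        intro hle
        exact hav hle heq
      apply hout
      apply mem_setBall_of_mem rho_nonneg (show G (prefList x s) ∈ prefSet x s from ?_)
        (by rw [(rho_metric.1 _ _).mpr rfl]; exact hτ.le)
      rw [heq, ← hxs i]
      exact mem_prefSet_of_lt (by omega)
    · -- z is a far point of class false: contradiction with the choice of s
      exact hzs ⟨r, heq⟩
  · -- use j = true
    push_neg at P
    obtain ⟨D, hD⟩ := P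
    obtain ⟨d, hd⟩ := hG (hyp ε τ B true) ⟨τ, B, true, hτ, hτε, rfl⟩
    set s := max (d+1) D with hs
    have hsucc := hd x (fun i => by rw [supp_hyp]; exact hxmem true i) (d+1) (hcov d) s
      (le_max_left _ _)
    obtain ⟨hin, hout⟩ := hsucc
    rw [supp_hyp] at hin
    have hfr : G (prefList x s) ∈ FR ε false := hD s (le_max_right _ _)
    obtain ⟨r, heq⟩ := hfr
    have : (true : Bool) = false := mem_SS_fr2 hε (by
      have heq2 : G (prefList x s) = pt (10*ε) (4*r+2) := by simpa using heq
      rw [← heq2]; exact hin)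
    simp at this

end Trap

/-- in `ℓ²`, generatability is metric-dependent: a class can be uniformly
generatable under the standard metric but not non-uniformly generatable under a strongly
equivalent metric. -/
theorem exists_metric_dependent_gen_l2 (ε : ℝ) (hε : 0 < ε) :
    ∃ (H : Set (ellTwo → Bool)) (ρ' : ellTwo → ellTwo → ℝ),
      UUS dist H ε ∧ IsMetricDist ρ' ∧
      (∃ c C : ℝ, 0 < c ∧ 0 < C ∧
        ∀ x y : ellTwo, c * dist x y ≤ ρ' x y ∧ ρ' x y ≤ C * dist x y) ∧
      (∀ τ : ℝ, 0 < τ → τ < ε → UnifGen dist τ τ H) ∧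
      (∀ τ : ℝ, 0 < τ → τ < ε → ¬ NonUnifGen ρ' τ τ H) := by
  refine ⟨Hcl ε, rho, uus_Hcl hε, rho_metric,
    ⟨1/2, 2, by norm_num, by norm_num, fun x y => ⟨rho_lower x y, rho_upper x y⟩⟩,
    fun τ h1 h2 => unifGen_Hcl hε h1 h2,
    fun τ h1 h2 => notNonUnifGen_Hcl hε h1 h2⟩

end Gen
end
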